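/- arXiv:1901.00209 — 3 statements merged into one kernel-verified Lean document; each statement's English description precedes it below -/
import Mathlib

section
/- Under the simplified communication model where a single message performs a walk v_0, v_1, ..., v_T on the graph (at each step t node v_t pushes the message to v_{t+1}, and only the opinion of the receiving node changes), the total change in opinion Σ_{v∈V} (μ^{(v)}_{θ̃,T} − μ^{(v)}_{θ̃,0}) equals Σ_{t=0}^{T−1} μ^{(v_{t+1})}_{θ̃,t}(1 − μ^{(v_{t+1})}_{θ̃,t}) / (μ^{(v_{t+1})}_{θ̃,t} + α^{(v_{t+1})}_{θ̃,t}·β^{(v_{t+1})}/ζ^{(v_{t+1})}). Hence maximizing the final total opinion over walk choices is equivalent to maximizing this sum of per-step rewards. -/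
theorem stmt_1 {V : Type*} [Fintype V] (T : ℕ) (v : ℕ → V)
    (α ρ : V → ℕ → ℝ) (β ζ : V → ℝ)
    (hβ : ∀ w, β w ∈ Set.Ioo (0:ℝ) 1) (hζ : ∀ w, 0 < ζ w)
    (hαpos : ∀ w t, 0 < α w t) (hρpos : ∀ w t, 0 < ρ w t)
    (μ : V → ℕ → ℝ) (hμ : ∀ w t, μ w t = α w t / ρ w t)
    (hwalk : ∀ t, v t ≠ v (t + 1))
    -- the receiving node updates its belief
    (hupd_α : ∀ t, α (v (t + 1)) (t + 1) = β (v (t + 1)) * α (v (t + 1)) t + ζ (v (t + 1)))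
    (hupd_ρ : ∀ t, ρ (v (t + 1)) (t + 1) = β (v (t + 1)) * ρ (v (t + 1)) t + ζ (v (t + 1)))
    -- all other nodes' opinions remain unchanged
    (hother : ∀ t w, w ≠ v (t + 1) → μ w (t + 1) = μ w t) :
    ∑ w : V, (μ w T - μ w 0) =
      ∑ t ∈ Finset.range T,
        μ (v (t + 1)) t * (1 - μ (v (t + 1)) t) /
          (μ (v (t + 1)) t + α (v (t + 1)) t * β (v (t + 1)) / ζ (v (t + 1))) := by
  induction T with
  | zero => simp
  | succ T ih =>
    rw [Finset.sum_range_succ, ← ih]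
    have hstep : ∑ w : V, (μ w (T + 1) - μ w 0) =
        ∑ w : V, (μ w T - μ w 0) + ∑ w : V, (μ w (T + 1) - μ w T) := by
      rw [← Finset.sum_add_distrib]
      apply Finset.sum_congr rfl
      intro w _
      ring
    rw [hstep]
    congr 1
    set u := v (T + 1) with hu
    have hsingle : ∑ w : V, (μ w (T + 1) - μ w T) = μ u (T + 1) - μ u T := by
      rw [Finset.sum_eq_single u]
      · intro w _ hw
        rw [hother T w hw]; ring
      · intro h; exact absurd (Finset.mem_univ u) h
    rw [hsingle]
    have hα := hαpos u T
    have hρ := hρpos u T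
    have hβu := (hβ u).1
    have hζu := hζ u
    have hd : 0 < β u * ρ u T + ζ u := by positivity
    rw [hμ u (T+1), hμ u T, hupd_α T, hupd_ρ T]
    have hd' : β (v (T + 1)) * ρ (v (T + 1)) T + ζ (v (T + 1)) ≠ 0 := hd.ne'
    field_simp
    ring
end

section
/- In the toy example, with r_c, r_d, R_{cc}, R_{dd}, η^{(c)}, η^{(d)} defined as before, if r_d/r_c < ((1+η^{(c)})/(1+2η^{(c)}))·((1+2η^{(d)})/(1+η^{(d)})), then R_{dd} < R_{cc}. -/
theorem stmt_4 (αc αd ρc ρd βc βd ζc ζd : ℝ)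
    (hαc : 0 < αc) (hαd : 0 < αd) (hρc : 0 < ρc) (hρd : 0 < ρd)
    (hβc : βc ∈ Set.Ioo (0:ℝ) 1) (hβd : βd ∈ Set.Ioo (0:ℝ) 1)
    (hζc : 0 < ζc) (hζd : 0 < ζd)
    (rc rd Rcc Rdd ηc ηd : ℝ)
    (hrc : rc = αc * ζc / ((βc * ρc + ζc) * ρc))
    (hrd : rd = αd * ζd / ((βd * ρd + ζd) * ρd))
    (hRcc : Rcc = 2 * αc * ζc / ((βc * ρc + 2 * ζc) * ρc))
    (hRdd : Rdd = 2 * αd * ζd / ((βd * ρd + 2 * ζd) * ρd))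
    (hηc : ηc = ζc / (βc * ρc)) (hηd : ηd = ζd / (βd * ρd))
    (hcond : rd / rc < ((1 + ηc) / (1 + 2 * ηc)) * ((1 + 2 * ηd) / (1 + ηd))) :
    Rdd < Rcc := by
  obtain ⟨hβc1, _⟩ := hβc
  obtain ⟨hβd1, _⟩ := hβd
  have hηcp : 0 < ηc := by rw [hηc]; positivity
  have hηdp : 0 < ηd := by rw [hηd]; positivity
  have hrcp : 0 < rc := by rw [hrc]; positivity
  have hrdp : 0 < rd := by rw [hrd]; positivity
  have hRddeq : Rdd = 2 * rd * ((1 + ηd) / (1 + 2 * ηd)) := by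
    rw [hRdd, hrd, hηd]
    have h1 : (0:ℝ) < βd * ρd := by positivity
    field_simp
  have hRcceq : Rcc = 2 * rc * ((1 + ηc) / (1 + 2 * ηc)) := by
    rw [hRcc, hrc, hηc]
    have h1 : (0:ℝ) < βc * ρc := by positivity
    field_simp
  rw [hRddeq, hRcceq]
  have h2 : (0:ℝ) < 1 + 2 * ηd := by linarith
  have h3 : (0:ℝ) < 1 + 2 * ηc := by linarith
  have h4 : (0:ℝ) < 1 + ηd := by linarith
  have h5 : (0:ℝ) < 1 + ηc := by linarith
  rw [div_lt_iff₀ hrcp, div_mul_div_comm, div_mul_eq_mul_div, lt_div_iff₀ (by positivity)] at hcond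
  rw [← mul_div_assoc, ← mul_div_assoc, div_lt_div_iff₀ h2 h3]
  nlinarith [hcond, mul_pos hrcp h5, mul_pos hrdp h4]
end

section
/- In the toy example, if both conditions 1/(1+2η^{(c)}) < r_d/r_c and r_d/r_c < min{1, ((1+η^{(c)})/(1+2η^{(c)}))·((1+2η^{(d)})/(1+η^{(d)}))} hold, then R_{cd} > R_{cc} > R_{dd}, and the mixed strategy p = (1 + (R_{cd} − R_{cc})/(R_{cd} − R_{dd}))^{−1} achieves an expected joint reward strictly greater than the maximum joint reward R_{cc} obtainable from any pure strategy profile where both players use the same pure strategy. -/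
lemma stmt_7_aux (A B C : ℝ) (h1 : A < B) (h2 : C < A) :
    A < A * ((1 + (B - A) / (B - C))⁻¹) ^ 2
      + 2 * B * ((1 + (B - A) / (B - C))⁻¹) * (1 - (1 + (B - A) / (B - C))⁻¹)
      + C * (1 - (1 + (B - A) / (B - C))⁻¹) ^ 2 := by
  have ha : 0 < B - A := by linarith
  have hb : 0 < B - C := by linarith
  have hab : 0 < (B - A) + (B - C) := by linarith
  have hp : (1 + (B - A) / (B - C))⁻¹ = (B - C) / ((B - A) + (B - C)) := by
    rw [show (1:ℝ) + (B - A) / (B - C) = ((B - A) + (B - C)) / (B - C) by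
      field_simp; ring, inv_div]
  rw [hp]
  rw [show (1:ℝ) - (B - C) / ((B - A) + (B - C)) = (B - A) / ((B - A) + (B - C)) by
    field_simp; ring]
  rw [div_pow, div_pow]
  have key : A * ((B - C) ^ 2 / ((B - A) + (B - C)) ^ 2)
      + 2 * B * ((B - C) / ((B - A) + (B - C))) * ((B - A) / ((B - A) + (B - C)))
      + C * ((B - A) ^ 2 / ((B - A) + (B - C)) ^ 2) - A
      = (B - A) ^ 2 / ((B - A) + (B - C)) := by
    field_simp
    ring
  have hpos : 0 < (B - A) ^ 2 / ((B - A) + (B - C)) := by positivity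
  linarith

theorem stmt_7 (αc αd ρc ρd βc βd ζc ζd : ℝ)
    (hαc : 0 < αc) (hαd : 0 < αd) (hρc : 0 < ρc) (hρd : 0 < ρd)
    (hβc : βc ∈ Set.Ioo (0:ℝ) 1) (hβd : βd ∈ Set.Ioo (0:ℝ) 1)
    (hζc : 0 < ζc) (hζd : 0 < ζd)
    (rc rd Rcd Rcc Rdd ηc ηd : ℝ) (E : ℝ → ℝ)
    (hrc : rc = αc * ζc / ((βc * ρc + ζc) * ρc))
    (hrd : rd = αd * ζd / ((βd * ρd + ζd) * ρd))
    (hRcd : Rcd = rc + rd)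
    (hRcc : Rcc = 2 * αc * ζc / ((βc * ρc + 2 * ζc) * ρc))
    (hRdd : Rdd = 2 * αd * ζd / ((βd * ρd + 2 * ζd) * ρd))
    (hηc : ηc = ζc / (βc * ρc)) (hηd : ηd = ζd / (βd * ρd))
    (hE : ∀ p, E p = Rcc * p ^ 2 + 2 * Rcd * p * (1 - p) + Rdd * (1 - p) ^ 2)
    (hcond1 : 1 / (1 + 2 * ηc) < rd / rc)
    (hcond2 : rd / rc < min 1 (((1 + ηc) / (1 + 2 * ηc)) * ((1 + 2 * ηd) / (1 + ηd)))) :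
    Rcd > Rcc ∧ Rcc > Rdd ∧
    E ((1 + (Rcd - Rcc) / (Rcd - Rdd))⁻¹) > Rcc := by
  have hbc : 0 < βc * ρc := mul_pos hβc.1 hρc
  have hbd : 0 < βd * ρd := mul_pos hβd.1 hρd
  have hDc : 0 < βc * ρc + ζc := by linarith
  have hDc2 : 0 < βc * ρc + 2 * ζc := by linarith
  have hDd : 0 < βd * ρd + ζd := by linarith
  have hDd2 : 0 < βd * ρd + 2 * ζd := by linarith
  have hrcpos : 0 < rc := by rw [hrc]; positivity
  have hrdpos : 0 < rd := by rw [hrd]; positivity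
  have hRcc' : Rcc = 2 * rc * (βc * ρc + ζc) / (βc * ρc + 2 * ζc) := by
    rw [hRcc, hrc]; field_simp
  have hRdd' : Rdd = 2 * rd * (βd * ρd + ζd) / (βd * ρd + 2 * ζd) := by
    rw [hRdd, hrd]; field_simp
  have hη2 : 1 + 2 * ηc = (βc * ρc + 2 * ζc) / (βc * ρc) := by
    rw [hηc]; field_simp; have := hβc.1.ne'; field_simp
  have hη2pos : 0 < 1 + 2 * ηc := by rw [hη2]; positivity
  have c1 : rc * (βc * ρc) < rd * (βc * ρc + 2 * ζc) := by
    have h := (div_lt_div_iff₀ hη2pos hrcpos).mp hcond1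
    rw [hη2] at h
    have h2 : 1 * rc * (βc * ρc) < rd * ((βc * ρc + 2 * ζc) / (βc * ρc)) * (βc * ρc) :=
      mul_lt_mul_of_pos_right h hbc
    calc rc * (βc * ρc) = 1 * rc * (βc * ρc) := by ring
      _ < rd * ((βc * ρc + 2 * ζc) / (βc * ρc)) * (βc * ρc) := h2
      _ = rd * (βc * ρc + 2 * ζc) := by have := hβc.1.ne'; field_simp
  have hcond2' := lt_of_lt_of_le hcond2 (min_le_right _ _)
  have c2 : rd * ((βc * ρc + 2 * ζc) * (βd * ρd + ζd)) <
      rc * ((βc * ρc + ζc) * (βd * ρd + 2 * ζd)) := by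
    have hrw : ((1 + ηc) / (1 + 2 * ηc)) * ((1 + 2 * ηd) / (1 + ηd)) =
        ((βc * ρc + ζc) * (βd * ρd + 2 * ζd)) /
        ((βc * ρc + 2 * ζc) * (βd * ρd + ζd)) := by
      rw [hηc, hηd]; field_simp; have := hβc.1.ne'; have := hβd.1.ne'; field_simp
      exact div_eq_of_eq_mul (by linarith [mul_pos hDc2 hDd] : (0:ℝ) < (ρc * βc + ζc * 2) * (ρd * βd + ζd)).ne' (by ring)
    rw [hrw] at hcond2'
    have hpos : 0 < (βc * ρc + 2 * ζc) * (βd * ρd + ζd) := by positivity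
    have h := (div_lt_div_iff₀ hrcpos hpos).mp hcond2'
    linarith [mul_comm ((βc * ρc + ζc) * (βd * ρd + 2 * ζd)) rc]
  have h1 : Rcd > Rcc := by
    rw [hRcd, hRcc', gt_iff_lt, div_lt_iff₀ hDc2]
    ring_nf; ring_nf at c1; linarith
  have h2 : Rcc > Rdd := by
    rw [hRcc', hRdd', gt_iff_lt, div_lt_div_iff₀ hDd2 hDc2]
    ring_nf; ring_nf at c2; linarith
  refine ⟨h1, h2, ?_⟩
  rw [hE]
  exact stmt_7_aux Rcc Rcd Rdd h1 h2
end
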